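/- Let M ∈ M_d(ℂ) be a matrix whose imaginary part Im(M) is symmetric positive definite, let x₀ ∈ ℝ^d, α ≥ 0, and let c ∈ L^∞(ℝ^d) satisfy |x - x₀|^{-α} c(x) ∈ L^∞(ℝ^d). Then there is a constant C > 0 independent of k such that for all k ≥ 1, ∫_{ℝ^d} |c(x)|² · |exp(ik⟨M(x-x₀), x-x₀⟩)|² dx ≤ C k^{-d/2 - α}. -/

import Mathlib

open MeasureTheory Real

lemma aux_rpow_le_exp (a b : ℝ) (ha : 0 ≤ a) (hb : 0 < b) :
    ∃ C : ℝ, 0 < C ∧ ∀ t : ℝ, 0 ≤ t → t ^ a ≤ C * Real.exp (b * t ^ 2) := by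
  refine ⟨Real.exp (a ^ 2 / (4 * b)) + 1, by positivity, fun t ht => ?_⟩
  rcases eq_or_lt_of_le ht with h | h
  · rcases eq_or_ne a 0 with rfl | ha'
    · simp only [Real.rpow_zero]
      nlinarith [Real.exp_pos (b * t ^ 2), Real.one_le_exp (by nlinarith : (0:ℝ) ≤ b * t ^ 2),
        Real.exp_pos ((0:ℝ) ^ 2 / (4 * b))]
    · rw [← h, Real.zero_rpow ha']
      positivity
  · have hlog : Real.log t ≤ t := (Real.log_le_sub_one_of_pos h).trans (by linarith)
    have h2 : a * Real.log t ≤ a * t := mul_le_mul_of_nonneg_left hlog ha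
    have h3 : a * t ≤ b * t ^ 2 + a ^ 2 / (4 * b) := by
      rw [← sub_nonneg]
      have key : b * t ^ 2 + a ^ 2 / (4 * b) - a * t = (2 * b * t - a) ^ 2 / (4 * b) := by
        field_simp; ring
      rw [key]; positivity
    calc t ^ a = Real.exp (Real.log t * a) := Real.rpow_def_of_pos h a
      _ ≤ Real.exp (b * t ^ 2 + a ^ 2 / (4 * b)) := by
          apply Real.exp_le_exp.2; nlinarith
      _ = Real.exp (a ^ 2 / (4 * b)) * Real.exp (b * t ^ 2) := by
          rw [← Real.exp_add]; ring_nf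
      _ ≤ (Real.exp (a ^ 2 / (4 * b)) + 1) * Real.exp (b * t ^ 2) := by
          have := Real.exp_pos (b * t ^ 2); nlinarith

lemma aux_integrable_gauss {V : Type*} [NormedAddCommGroup V] [InnerProductSpace ℝ V]
    [FiniteDimensional ℝ V] [MeasurableSpace V] [BorelSpace V] {b : ℝ} (hb : 0 < b) :
    Integrable (fun v : V => Real.exp (-b * ‖v‖ ^ 2)) := by
  have h := (GaussianFourier.integrable_cexp_neg_mul_sq_norm_add (V := V)
    (b := (b : ℂ)) (by simpa using hb) 0 0).norm
  refine h.congr (Filter.Eventually.of_forall fun v => ?_)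
  show ‖Complex.exp _‖ = _
  rw [Complex.norm_exp]
  have : (-(b:ℂ) * (‖v‖:ℂ) ^ 2 + 0 * ((inner ℝ (0:V) v : ℝ) : ℂ)).re = -b * ‖v‖ ^ 2 := by
    simp only [Complex.add_re, Complex.mul_re, Complex.neg_re, Complex.neg_im,
      Complex.ofReal_re, Complex.ofReal_im, Complex.zero_re, Complex.zero_im,
      ← Complex.ofReal_pow]
    ring
  rw [this]

lemma aux_quad {d : ℕ} (A : Matrix (Fin d) (Fin d) ℝ) (hA : A.PosDef) :
    ∃ lam : ℝ, 0 < lam ∧ ∀ v : EuclideanSpace ℝ (Fin d),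
      lam * ‖v‖ ^ 2 ≤ ∑ i, ∑ j, A i j * v i * v j := by
  set φ : EuclideanSpace ℝ (Fin d) → ℝ := fun v => ∑ i, ∑ j, A i j * v i * v j with hφdef
  have hkey : ∀ v : EuclideanSpace ℝ (Fin d),
      dotProduct (fun i => v i) (A.mulVec fun i => v i) = φ v := by
    intro v
    simp only [dotProduct, Matrix.mulVec, hφdef, Finset.mul_sum]
    exact Finset.sum_congr rfl fun i _ => Finset.sum_congr rfl fun j _ => by ring
  have hφ_pos : ∀ v : EuclideanSpace ℝ (Fin d), v ≠ 0 → 0 < φ v := by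
    intro v hv
    have h2 := hA.dotProduct_mulVec_pos (x := fun i => v i) (by
      intro h
      exact hv (by ext i; exact congrFun h i))
    rw [star_trivial] at h2
    exact (hkey v) ▸ h2
  have hφ_smul : ∀ (t : ℝ) (v : EuclideanSpace ℝ (Fin d)), φ (t • v) = t ^ 2 * φ v := by
    intro t v
    simp only [hφdef, PiLp.smul_apply, smul_eq_mul, Finset.mul_sum]
    exact Finset.sum_congr rfl fun i _ => Finset.sum_congr rfl fun j _ => by ring
  have hφ_cont : Continuous φ := by
    apply continuous_finset_sum; intro i _
    apply continuous_finset_sum; intro j _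
    exact (continuous_const.mul (EuclideanSpace.proj (𝕜 := ℝ) i).continuous).mul
      (EuclideanSpace.proj (𝕜 := ℝ) j).continuous
  by_cases hd : ∃ u : EuclideanSpace ℝ (Fin d), u ≠ 0
  · obtain ⟨u0, hu0⟩ := hd
    have hne : (Metric.sphere (0 : EuclideanSpace ℝ (Fin d)) 1).Nonempty :=
      ⟨‖u0‖⁻¹ • u0, by
        simp [mem_sphere_zero_iff_norm, norm_smul, abs_of_nonneg,
          inv_mul_cancel₀ (norm_ne_zero_iff.2 hu0)]⟩
    obtain ⟨u, hu_mem, hu_min⟩ :=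
      (isCompact_sphere (0 : EuclideanSpace ℝ (Fin d)) 1).exists_isMinOn hne
        hφ_cont.continuousOn
    have hu_norm : ‖u‖ = 1 := by simpa [mem_sphere_zero_iff_norm] using hu_mem
    have hu_ne : u ≠ 0 := by intro h; rw [h] at hu_norm; simp at hu_norm
    refine ⟨φ u, hφ_pos u hu_ne, fun v => ?_⟩
    rcases eq_or_ne v 0 with rfl | hv
    · simp [hφdef]
    · have hvn : (0:ℝ) < ‖v‖ := norm_pos_iff.2 hv
      have h2 : φ u ≤ φ (‖v‖⁻¹ • v) := isMinOn_iff.1 hu_min _ (by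
        simp [mem_sphere_zero_iff_norm, norm_smul, abs_of_nonneg, inv_mul_cancel₀ hvn.ne'])
      rw [hφ_smul] at h2
      have h3 : ‖v‖⁻¹ ^ 2 * φ v * ‖v‖ ^ 2 = φ v := by field_simp
      show _ ≤ φ v
      linarith [mul_le_mul_of_nonneg_right h2 (sq_nonneg ‖v‖), h3]
  · push_neg at hd
    refine ⟨1, one_pos, fun v => ?_⟩
    rw [hd v]
    simp [hφdef]

theorem stmt_12 {d : ℕ} (M : Matrix (Fin d) (Fin d) ℂ)
    (hIm : (Matrix.of fun i j => (M i j).im).PosDef)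
    (x₀ : EuclideanSpace ℝ (Fin d)) (α : ℝ) (hα : 0 ≤ α)
    (c : EuclideanSpace ℝ (Fin d) → ℂ) (hc_meas : Measurable c)
    (K : ℝ) (hc_bdd : ∀ x, ‖c x‖ ≤ K)
    (hc_van : ∀ x, ‖c x‖ ≤ K * ‖x - x₀‖ ^ α) :
    ∃ C : ℝ, 0 < C ∧ ∀ k : ℝ, 1 ≤ k →
      (∫ x : EuclideanSpace ℝ (Fin d),
        ‖c x‖ ^ 2 * ‖Complex.exp (Complex.I * (k : ℂ) *
          ∑ i, ∑ i', M i i' * ((x i - x₀ i : ℝ) : ℂ) * ((x i' - x₀ i' : ℝ) : ℂ))‖ ^ 2) ≤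
      C * k ^ (-(d : ℝ) / 2 - α) := by
  obtain ⟨lam, hlam, hquad⟩ := aux_quad (Matrix.of fun i j => (M i j).im) hIm
  have hquad' : ∀ v : EuclideanSpace ℝ (Fin d),
      lam * ‖v‖ ^ 2 ≤ ∑ i, ∑ j, (M i j).im * v i * v j := hquad
  have hK0 : 0 ≤ K := le_trans (norm_nonneg _) (hc_bdd 0)
  set g : EuclideanSpace ℝ (Fin d) → ℝ :=
    fun v => ‖v‖ ^ (2 * α) * Real.exp (-(2 * lam) * ‖v‖ ^ 2) with hgdef
  have hg_nonneg : ∀ v, 0 ≤ g v := fun v => by positivity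
  have hg_int : Integrable g := by
    obtain ⟨C₀, hC₀, hC₀b⟩ := aux_rpow_le_exp (2 * α) lam (by positivity) hlam
    have hint : Integrable (fun v : EuclideanSpace ℝ (Fin d) =>
        C₀ * Real.exp (-lam * ‖v‖ ^ 2)) := (aux_integrable_gauss hlam).const_mul _
    refine hint.mono' ?_ (Filter.Eventually.of_forall fun v => ?_)
    · refine AEStronglyMeasurable.mul ?_ ?_
      · exact (measurable_norm.pow_const (2*α)).aestronglyMeasurable
      · exact (((measurable_norm.pow_const 2).const_mul (-(2*lam))).exp).aestronglyMeasurable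
    · rw [Real.norm_eq_abs, abs_of_nonneg (hg_nonneg v)]
      have h := hC₀b ‖v‖ (norm_nonneg v)
      calc ‖v‖ ^ (2*α) * Real.exp (-(2*lam) * ‖v‖^2)
          ≤ (C₀ * Real.exp (lam * ‖v‖^2)) * Real.exp (-(2*lam) * ‖v‖^2) :=
            mul_le_mul_of_nonneg_right h (Real.exp_pos _).le
        _ = C₀ * Real.exp (-lam * ‖v‖^2) := by
            rw [mul_assoc, ← Real.exp_add]; ring_nf
  have hIg : 0 ≤ ∫ v, g v := integral_nonneg hg_nonneg
  refine ⟨K ^ 2 * (∫ v, g v) + 1, by positivity, fun k hk => ?_⟩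
  have hk0 : (0:ℝ) < k := lt_of_lt_of_le one_pos hk
  have hsk0 : (0:ℝ) < Real.sqrt k := Real.sqrt_pos.2 hk0
  -- scaling identity for g
  have hscaleg : ∀ w : EuclideanSpace ℝ (Fin d),
      g (Real.sqrt k • w) = k ^ α * (‖w‖ ^ (2*α) * Real.exp (-(2*lam*k) * ‖w‖^2)) := by
    intro w
    have hns : ‖Real.sqrt k • w‖ = Real.sqrt k * ‖w‖ := by
      rw [norm_smul, Real.norm_eq_abs, abs_of_nonneg (Real.sqrt_nonneg k)]
    have h1 : ‖Real.sqrt k • w‖ ^ (2*α) = k ^ α * ‖w‖ ^ (2*α) := by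
      rw [hns, Real.mul_rpow (Real.sqrt_nonneg k) (norm_nonneg w)]
      congr 1
      rw [Real.sqrt_eq_rpow, ← Real.rpow_mul hk0.le,
        show (1:ℝ)/2 * (2*α) = α by ring]
    have h2 : ‖Real.sqrt k • w‖ ^ 2 = k * ‖w‖ ^ 2 := by
      rw [hns, mul_pow, Real.sq_sqrt hk0.le]
    rw [hgdef]
    simp only
    rw [h1, h2, mul_assoc]
    congr 2
    ring
  have hφsub : ∀ x : EuclideanSpace ℝ (Fin d), ∀ i : Fin d, (x - x₀) i = x i - x₀ i :=
    fun x i => rfl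
  -- pointwise bound
  have hpt : ∀ x : EuclideanSpace ℝ (Fin d),
      ‖c x‖ ^ 2 * ‖Complex.exp (Complex.I * (k : ℂ) *
          ∑ i, ∑ i', M i i' * ((x i - x₀ i : ℝ) : ℂ) * ((x i' - x₀ i' : ℝ) : ℂ))‖ ^ 2
        ≤ K ^ 2 * (k ^ (-α) * g (Real.sqrt k • (x - x₀))) := by
    intro x
    have him : (∑ i, ∑ i', M i i' * ((x i - x₀ i : ℝ) : ℂ) * ((x i' - x₀ i' : ℝ) : ℂ)).im
        = ∑ i, ∑ j, (M i j).im * (x - x₀) i * (x - x₀) j := by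
      rw [Complex.im_sum]
      refine Finset.sum_congr rfl fun i _ => ?_
      rw [Complex.im_sum]
      refine Finset.sum_congr rfl fun j _ => ?_
      simp only [Complex.mul_im, Complex.ofReal_re, Complex.ofReal_im, hφsub,
        mul_zero, zero_mul, add_zero, zero_add]
    have hre : (Complex.I * (k : ℂ) *
        ∑ i, ∑ i', M i i' * ((x i - x₀ i : ℝ) : ℂ) * ((x i' - x₀ i' : ℝ) : ℂ)).re
        = -(k * ∑ i, ∑ j, (M i j).im * (x - x₀) i * (x - x₀) j) := by
      rw [Complex.mul_re, Complex.mul_re, Complex.mul_im, him]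
      simp [Complex.I_re, Complex.I_im]
    have hnorm : ‖Complex.exp (Complex.I * (k : ℂ) *
        ∑ i, ∑ i', M i i' * ((x i - x₀ i : ℝ) : ℂ) * ((x i' - x₀ i' : ℝ) : ℂ))‖ ^ 2
        = Real.exp (-(2*k) * ∑ i, ∑ j, (M i j).im * (x - x₀) i * (x - x₀) j) := by
      rw [Complex.norm_exp, hre, pow_two, ← Real.exp_add]
      congr 1; ring
    rw [hnorm, hscaleg]
    have hexp : Real.exp (-(2*k) * ∑ i, ∑ j, (M i j).im * (x - x₀) i * (x - x₀) j)
        ≤ Real.exp (-(2*lam*k) * ‖x - x₀‖^2) := by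
      apply Real.exp_le_exp.2
      have := hquad' (x - x₀)
      nlinarith
    have hc2 : ‖c x‖ ^ 2 ≤ K ^ 2 * ‖x - x₀‖ ^ (2*α) := by
      have h := pow_le_pow_left₀ (norm_nonneg (c x)) (hc_van x) 2
      calc ‖c x‖ ^ 2 ≤ (K * ‖x - x₀‖ ^ α) ^ 2 := h
        _ = K ^ 2 * ‖x - x₀‖ ^ (2*α) := by
            rw [mul_pow, ← Real.rpow_natCast (‖x - x₀‖ ^ α) 2,
              ← Real.rpow_mul (norm_nonneg _)]
            norm_num [mul_comm]
    have hexp_pos := Real.exp_pos (-(2*lam*k) * ‖x - x₀‖^2)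
    have hrw : K ^ 2 * (k ^ (-α) * (k ^ α * (‖x - x₀‖ ^ (2*α) *
        Real.exp (-(2*lam*k) * ‖x - x₀‖^2))))
        = K ^ 2 * (‖x - x₀‖ ^ (2*α) * Real.exp (-(2*lam*k) * ‖x - x₀‖^2)) := by
      rw [← mul_assoc (k ^ (-α)), ← Real.rpow_add hk0]
      simp
    rw [hrw]
    calc ‖c x‖ ^ 2 * Real.exp (-(2*k) * ∑ i, ∑ j, (M i j).im * (x - x₀) i * (x - x₀) j)
        ≤ (K ^ 2 * ‖x - x₀‖ ^ (2*α)) * Real.exp (-(2*lam*k) * ‖x - x₀‖^2) := by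
          apply mul_le_mul hc2 hexp (Real.exp_pos _).le (by positivity)
      _ = K ^ 2 * (‖x - x₀‖ ^ (2*α) * Real.exp (-(2*lam*k) * ‖x - x₀‖^2)) := by ring
  -- integrability of majorant
  have hmaj_int : Integrable (fun x : EuclideanSpace ℝ (Fin d) =>
      K ^ 2 * (k ^ (-α) * g (Real.sqrt k • (x - x₀)))) := by
    have h1 : Integrable (fun v : EuclideanSpace ℝ (Fin d) => g (Real.sqrt k • v)) :=
      hg_int.comp_smul hsk0.ne'
    have h2 := h1.comp_sub_right x₀
    exact (h2.const_mul _).const_mul _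
  have hmono := integral_mono_of_nonneg
    (Filter.Eventually.of_forall fun x => by positivity) hmaj_int
    (Filter.Eventually.of_forall hpt)
  refine hmono.trans ?_
  -- compute the majorant integral
  have hint1 : (∫ x : EuclideanSpace ℝ (Fin d),
      K ^ 2 * (k ^ (-α) * g (Real.sqrt k • (x - x₀))))
      = K ^ 2 * (k ^ (-α) * ∫ x : EuclideanSpace ℝ (Fin d), g (Real.sqrt k • (x - x₀))) := by
    rw [integral_const_mul, integral_const_mul]
  have hint2 : (∫ x : EuclideanSpace ℝ (Fin d), g (Real.sqrt k • (x - x₀)))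
      = ∫ v : EuclideanSpace ℝ (Fin d), g (Real.sqrt k • v) :=
    integral_sub_right_eq_self (fun v => g (Real.sqrt k • v)) x₀
  have hint3 : (∫ v : EuclideanSpace ℝ (Fin d), g (Real.sqrt k • v))
      = ((Real.sqrt k ^ (Module.finrank ℝ (EuclideanSpace ℝ (Fin d))))⁻¹) • ∫ v, g v :=
    Measure.integral_comp_smul_of_nonneg volume g (Real.sqrt k) (hR := Real.sqrt_nonneg k)
  have hfr : Module.finrank ℝ (EuclideanSpace ℝ (Fin d)) = d := by
    simp [finrank_euclideanSpace]
  have hsd : ((Real.sqrt k) ^ d)⁻¹ = k ^ (-(d:ℝ)/2) := by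
    rw [Real.sqrt_eq_rpow, ← Real.rpow_natCast (k ^ ((1:ℝ)/2)) d, ← Real.rpow_mul hk0.le,
      ← Real.rpow_neg hk0.le]
    congr 1
    ring
  rw [hint1, hint2, hint3, hfr, hsd, smul_eq_mul]
  have hre : K ^ 2 * (k ^ (-α) * (k ^ (-(d:ℝ)/2) * ∫ v, g v))
      = (K ^ 2 * ∫ v, g v) * k ^ (-(d:ℝ)/2 - α) := by
    rw [show -(d:ℝ)/2 - α = -(d:ℝ)/2 + -α by ring, Real.rpow_add hk0]
    ring
  rw [hre]
  have hpos : (0:ℝ) < k ^ (-(d:ℝ)/2 - α) := Real.rpow_pos_of_pos hk0 _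
  have : K ^ 2 * ∫ v, g v ≤ K ^ 2 * (∫ v, g v) + 1 := by linarith
  exact mul_le_mul_of_nonneg_right this hpos.le
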